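/- Let C be a small category, Ĉ = Set^{C^op}, and let 𝒞 be a reflective full subcategory of Ĉ with inclusion i through which the Yoneda embedding factors via ŷ : C → 𝒞. If ⊗ : 𝒞 × 𝒞 → 𝒞 is the tensor product of a closed symmetric monoidal structure on 𝒞, then ⊗ is naturally isomorphic to the left Kan extension of ⊗ ∘ (ŷ × ŷ) : C × C → 𝒞 along ŷ × ŷ : C × C → 𝒞 × 𝒞. -/

import Mathlib

open CategoryTheory MonoidalCategory Limits

universe u

namespace DayKanAux

section Generic

/-- A left Kan extension criterion: if whiskering along `K` is bijective on natural
transformations out of `F'`, then `(F', 𝟙)` is a left Kan extension of `K ⋙ F'` along `K`. -/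
theorem isLKE_of_bijective {A₀ : Type*} {B₀ : Type*} {H₀ : Type*}
    [Category A₀] [Category B₀] [Category H₀] (K : A₀ ⥤ B₀) (F' : B₀ ⥤ H₀)
    (h : ∀ G : B₀ ⥤ H₀, Function.Bijective (fun β : F' ⟶ G => Functor.whiskerLeft K β)) :
    F'.IsLeftKanExtension (𝟙 (K ⋙ F')) := by
  refine ⟨⟨IsInitial.ofUniqueHom (fun Y => StructuredArrow.homMk ((h Y.right).2 Y.hom).choose ?_)
    (fun Y m => ?_)⟩⟩
  · simpa [Functor.LeftExtension.mk] using ((h Y.right).2 Y.hom).choose_spec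
  · refine StructuredArrow.hom_ext _ _ ?_
    apply (h Y.right).1
    have hw := StructuredArrow.w m
    simp only [Functor.LeftExtension.mk] at hw
    dsimp at hw ⊢
    rw [Category.id_comp] at hw
    exact hw.trans (((h Y.right).2 Y.hom).choose_spec).symm

end Generic

@[simp] lemma costructuredArrow_proj_obj {A₀ : Type*} {B₀ : Type*} [Category A₀] [Category B₀]
    (S : A₀ ⥤ B₀) (T : B₀) (X : CostructuredArrow S T) :
    (CostructuredArrow.proj S T).obj X = X.left := rfl

@[simp] lemma costructuredArrow_proj_map {A₀ : Type*} {B₀ : Type*} [Category A₀] [Category B₀]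
    (S : A₀ ⥤ B₀) (T : B₀) {X Y : CostructuredArrow S T} (f : X ⟶ Y) :
    (CostructuredArrow.proj S T).map f = f.left := rfl

@[simp] lemma sectR_obj_aux {A₀ : Type*} {B₀ : Type*} [Category A₀] [Category B₀]
    (Z : A₀) (X : B₀) : (Prod.sectR Z B₀).obj X = (Z, X) := rfl

@[simp] lemma sectR_map_aux {A₀ : Type*} {B₀ : Type*} [Category A₀] [Category B₀]
    (Z : A₀) {X Y : B₀} (f : X ⟶ Y) :
    (Prod.sectR Z B₀).map f = ((𝟙 Z, f) : (Z, X) ⟶ (Z, Y)) := rfl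

@[simp] lemma sectL_obj_aux {A₀ : Type*} {B₀ : Type*} [Category A₀] [Category B₀]
    (Z : B₀) (X : A₀) : (Prod.sectL A₀ Z).obj X = (X, Z) := rfl

@[simp] lemma sectL_map_aux {A₀ : Type*} {B₀ : Type*} [Category A₀] [Category B₀]
    (Z : B₀) {X Y : A₀} (f : X ⟶ Y) :
    (Prod.sectL A₀ Z).map f = ((f, 𝟙 Z) : (X, Z) ⟶ (Y, Z)) := rfl

@[simp] lemma tautologicalCocone_pt_aux {C₀ : Type u} [SmallCategory C₀] (P : C₀ᵒᵖ ⥤ Type u) :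
    (Presheaf.tautologicalCocone P).pt = P := rfl

@[simp] lemma tautologicalCocone_ι_app_aux {C₀ : Type u} [SmallCategory C₀]
    (P : C₀ᵒᵖ ⥤ Type u) (X : CostructuredArrow yoneda P) :
    (Presheaf.tautologicalCocone P).ι.app X = X.hom := rfl

variable {C : Type u} [SmallCategory C]
    {D : Type (u + 1)} [Category.{u} D]
    (i : D ⥤ (Cᵒᵖ ⥤ Type u)) [Reflective i]
    (yhat : C ⥤ D) (hy : yhat ⋙ i = yoneda)

/-- The isomorphism `yhat ⋙ i ≅ yoneda` from the hypothesis. -/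
noncomputable def e : yhat ⋙ i ≅ yoneda := eqToIso hy

/-- To a map of presheaves `yoneda.obj c ⟶ i.obj d` we associate a map `yhat.obj c ⟶ d`. -/
noncomputable def psi {d : D} {c : C} (g : yoneda.obj c ⟶ i.obj d) : yhat.obj c ⟶ d :=
  i.preimage ((e i yhat hy).hom.app c ≫ g)

lemma i_map_psi {d : D} {c : C} (g : yoneda.obj c ⟶ i.obj d) :
    i.map (psi i yhat hy g) = (e i yhat hy).hom.app c ≫ g :=
  i.map_preimage _

lemma psi_natural {d : D} {c c' : C} (h : c ⟶ c') (g : yoneda.obj c' ⟶ i.obj d) :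
    yhat.map h ≫ psi i yhat hy g = psi i yhat hy (yoneda.map h ≫ g) := by
  apply i.map_injective
  rw [Functor.map_comp, i_map_psi, i_map_psi, ← Category.assoc, ← Category.assoc]
  congr 1
  exact (e i yhat hy).hom.naturality h

lemma psi_comp {d d₂ : D} {c : C} (g : yoneda.obj c ⟶ i.obj d) (f : d ⟶ d₂) :
    psi i yhat hy g ≫ f = psi i yhat hy (g ≫ i.map f) := by
  apply i.map_injective
  rw [Functor.map_comp, i_map_psi, i_map_psi, Category.assoc]

lemma psi_eInv (c : C) : psi i yhat hy ((e i yhat hy).inv.app c) = 𝟙 (yhat.obj c) := by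
  apply i.map_injective
  rw [i_map_psi]
  exact ((e i yhat hy).hom_inv_id_app c).trans (i.map_id _).symm

/-- The density cocone: every object of `D` is a colimit of objects in the image of `yhat`. -/
@[simps]
noncomputable def densityCocone (d : D) :
    Cocone (CostructuredArrow.proj yoneda (i.obj d) ⋙ yhat) where
  pt := d
  ι :=
    { app := fun g => psi i yhat hy g.hom
      naturality := fun g g' h => by
        dsimp
        rw [Category.comp_id, psi_natural, CostructuredArrow.w h] }

/-- The density cocone is a colimit cocone. -/
noncomputable def densityIsColimit (d : D) : IsColimit (densityCocone i yhat hy d) := by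
  letI : ReflectsColimitsOfSize.{u, u} i := fullyFaithful_reflectsColimits i
  apply isColimitOfReflects i
  let w : (CostructuredArrow.proj yoneda (i.obj d) ⋙ yhat) ⋙ i ≅
      CostructuredArrow.proj yoneda (i.obj d) ⋙ yoneda :=
    Functor.associator _ _ _ ≪≫ Functor.isoWhiskerLeft _ (e i yhat hy)
  refine IsColimit.ofIsoColimit ((IsColimit.precomposeHomEquiv w _).symm
    (Presheaf.isColimitTautologicalCocone (i.obj d))) (Cocones.ext (Iso.refl _) fun g => ?_)
  dsimp [w, densityCocone]
  erw [Category.comp_id, Category.id_comp]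
  exact (i_map_psi i yhat hy g.hom).symm

section SndVar

variable {A : Type*} [Category A]

/-- Auxiliary cocone for extending a transformation in the second variable. -/
@[simps]
noncomputable def extCoconeSnd (M G : A × D ⥤ D)
    (γ : (𝟭 A).prod yhat ⋙ M ⟶ (𝟭 A).prod yhat ⋙ G) (a : A) (d : D) :
    Cocone ((CostructuredArrow.proj yoneda (i.obj d) ⋙ yhat) ⋙ (Prod.sectR a D ⋙ M)) where
  pt := G.obj (a, d)
  ι :=
    { app := fun g => γ.app (a, g.left) ≫ G.map (𝟙 a, psi i yhat hy g.hom)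
      naturality := fun g g' h => by
        dsimp
        rw [Category.comp_id]
        have nat := γ.naturality ((𝟙 a, h.left) : ((a, g.left) : A × C) ⟶ (a, g'.left))
        dsimp at nat
        rw [← Category.assoc, nat, Category.assoc, ← G.map_comp, prod_comp,
          Category.comp_id, psi_natural, CostructuredArrow.w h] }

theorem restriction_bijective_snd (M G : A × D ⥤ D)
    (hM : ∀ (a : A) (d : D),
      IsColimit ((Prod.sectR a D ⋙ M).mapCocone (densityCocone i yhat hy d))) :
    Function.Bijective
      (fun (β : M ⟶ G) => Functor.whiskerLeft ((𝟭 A).prod yhat) β) := by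
  constructor
  · intro β₁ β₂ h
    ext ⟨a, d⟩
    refine (hM a d).hom_ext fun g => ?_
    have h' := congr_app h (a, g.left)
    dsimp [densityCocone] at h' ⊢
    have n₁ := β₁.naturality ((𝟙 a, psi i yhat hy g.hom) :
      ((a, yhat.obj g.left) : A × D) ⟶ (a, d))
    have n₂ := β₂.naturality ((𝟙 a, psi i yhat hy g.hom) :
      ((a, yhat.obj g.left) : A × D) ⟶ (a, d))
    rw [n₁, n₂, h']
  · intro γ
    refine ⟨{ app := fun x => (hM x.1 x.2).desc (extCoconeSnd i yhat hy M G γ x.1 x.2)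
              naturality := ?_ }, ?_⟩
    · rintro ⟨a, d⟩ ⟨a₂, d₂⟩ ⟨f₁, f₂⟩
      refine (hM a d).hom_ext fun g => ?_
      dsimp [densityCocone]
      have fac := (hM a d).fac (extCoconeSnd i yhat hy M G γ a d) g
      have fac₂ := (hM a₂ d₂).fac (extCoconeSnd i yhat hy M G γ a₂ d₂)
        (CostructuredArrow.mk (g.hom ≫ i.map f₂))
      dsimp at fac fac₂
      simp only [Functor.comp_map, densityCocone_ι_app, extCoconeSnd_ι_app, sectR_map_aux, CostructuredArrow.mk_left, CostructuredArrow.mk_hom_eq_self] at fac fac₂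
      have split : CategoryStruct.comp (X := ((a, yhat.obj g.left) : A × D)) (Y := (a, d))
            (Z := (a₂, d₂)) (𝟙 a, psi i yhat hy g.hom) (f₁, f₂) =
          CategoryStruct.comp (X := ((a, yhat.obj g.left) : A × D))
            (Y := (a₂, yhat.obj g.left)) (Z := (a₂, d₂)) (f₁, 𝟙 (yhat.obj g.left))
            (𝟙 a₂, psi i yhat hy (g.hom ≫ i.map f₂)) := by
        rw [prod_comp, prod_comp]
        simp [psi_comp]
      erw [← Category.assoc, ← M.map_comp, split, M.map_comp, Category.assoc, fac₂]
      have nat := γ.naturality ((f₁, 𝟙 g.left) : ((a, g.left) : A × C) ⟶ (a₂, g.left))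
      dsimp at nat
      rw [CategoryTheory.Functor.map_id] at nat
      erw [← Category.assoc, nat, Category.assoc, ← G.map_comp, prod_comp]
      have split₂ : CategoryStruct.comp (X := ((a, yhat.obj g.left) : A × D)) (Y := (a, d))
            (Z := (a₂, d₂)) (𝟙 a, psi i yhat hy g.hom) (f₁, f₂) =
          (((f₁ ≫ 𝟙 a₂, 𝟙 (yhat.obj g.left) ≫ psi i yhat hy (g.hom ≫ i.map f₂))) :
            ((a, yhat.obj g.left) : A × D) ⟶ (a₂, d₂)) := by
        rw [prod_comp]
        simp [psi_comp]
      dsimp only [Prod.mkHom]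
      erw [← split₂, G.map_comp, ← Category.assoc, ← fac, Category.assoc]
      rfl
    · ext ⟨a, c⟩
      dsimp
      have fac := (hM a (yhat.obj c)).fac (extCoconeSnd i yhat hy M G γ a (yhat.obj c))
        (CostructuredArrow.mk ((e i yhat hy).inv.app c))
      dsimp at fac
      simp only [Functor.comp_map, densityCocone_ι_app, extCoconeSnd_ι_app, sectR_map_aux, CostructuredArrow.mk_left, CostructuredArrow.mk_hom_eq_self] at fac
      erw [psi_eInv] at fac
      erw [show ((𝟙 a, 𝟙 (yhat.obj c)) : ((a, yhat.obj c) : A × D) ⟶ (a, yhat.obj c)) = 𝟙 (((a, yhat.obj c)) : A × D) from rfl, M.map_id, G.map_id, Category.id_comp, Category.comp_id] at fac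
      exact fac

end SndVar

section FstVar

variable {A : Type*} [Category A]

/-- Auxiliary cocone for extending a transformation in the first variable. -/
@[simps]
noncomputable def extCoconeFst (M G : D × A ⥤ D)
    (γ : yhat.prod (𝟭 A) ⋙ M ⟶ yhat.prod (𝟭 A) ⋙ G) (a : A) (d : D) :
    Cocone ((CostructuredArrow.proj yoneda (i.obj d) ⋙ yhat) ⋙ (Prod.sectL D a ⋙ M)) where
  pt := G.obj (d, a)
  ι :=
    { app := fun g => γ.app (g.left, a) ≫ G.map (psi i yhat hy g.hom, 𝟙 a)
      naturality := fun g g' h => by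
        dsimp
        rw [Category.comp_id]
        have nat := γ.naturality ((h.left, 𝟙 a) : ((g.left, a) : C × A) ⟶ (g'.left, a))
        dsimp at nat
        rw [← Category.assoc, nat, Category.assoc, ← G.map_comp, prod_comp,
          Category.comp_id, psi_natural, CostructuredArrow.w h] }

theorem restriction_bijective_fst (M G : D × A ⥤ D)
    (hM : ∀ (a : A) (d : D),
      IsColimit ((Prod.sectL D a ⋙ M).mapCocone (densityCocone i yhat hy d))) :
    Function.Bijective
      (fun (β : M ⟶ G) => Functor.whiskerLeft (yhat.prod (𝟭 A)) β) := by
  constructor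
  · intro β₁ β₂ h
    ext ⟨d, a⟩
    refine (hM a d).hom_ext fun g => ?_
    have h' := congr_app h (g.left, a)
    dsimp [densityCocone] at h' ⊢
    have n₁ := β₁.naturality ((psi i yhat hy g.hom, 𝟙 a) :
      ((yhat.obj g.left, a) : D × A) ⟶ (d, a))
    have n₂ := β₂.naturality ((psi i yhat hy g.hom, 𝟙 a) :
      ((yhat.obj g.left, a) : D × A) ⟶ (d, a))
    rw [n₁, n₂, h']
  · intro γ
    refine ⟨{ app := fun x => (hM x.2 x.1).desc (extCoconeFst i yhat hy M G γ x.2 x.1)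
              naturality := ?_ }, ?_⟩
    · rintro ⟨d, a⟩ ⟨d₂, a₂⟩ ⟨f₁, f₂⟩
      refine (hM a d).hom_ext fun g => ?_
      dsimp [densityCocone]
      have fac := (hM a d).fac (extCoconeFst i yhat hy M G γ a d) g
      have fac₂ := (hM a₂ d₂).fac (extCoconeFst i yhat hy M G γ a₂ d₂)
        (CostructuredArrow.mk (g.hom ≫ i.map f₁))
      dsimp at fac fac₂
      simp only [Functor.comp_map, densityCocone_ι_app, extCoconeFst_ι_app, sectL_map_aux, CostructuredArrow.mk_left, CostructuredArrow.mk_hom_eq_self] at fac fac₂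
      have split : CategoryStruct.comp (X := ((yhat.obj g.left, a) : D × A)) (Y := (d, a))
            (Z := (d₂, a₂)) (psi i yhat hy g.hom, 𝟙 a) (f₁, f₂) =
          CategoryStruct.comp (X := ((yhat.obj g.left, a) : D × A))
            (Y := (yhat.obj g.left, a₂)) (Z := (d₂, a₂)) (𝟙 (yhat.obj g.left), f₂)
            (psi i yhat hy (g.hom ≫ i.map f₁), 𝟙 a₂) := by
        rw [prod_comp, prod_comp]
        simp [psi_comp]
      erw [← Category.assoc, ← M.map_comp, split, M.map_comp, Category.assoc, fac₂]
      have nat := γ.naturality ((𝟙 g.left, f₂) : ((g.left, a) : C × A) ⟶ (g.left, a₂))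
      dsimp at nat
      rw [CategoryTheory.Functor.map_id] at nat
      erw [← Category.assoc, nat, Category.assoc, ← G.map_comp, prod_comp]
      have split₂ : CategoryStruct.comp (X := ((yhat.obj g.left, a) : D × A)) (Y := (d, a))
            (Z := (d₂, a₂)) (psi i yhat hy g.hom, 𝟙 a) (f₁, f₂) =
          (((𝟙 (yhat.obj g.left) ≫ psi i yhat hy (g.hom ≫ i.map f₁), f₂ ≫ 𝟙 a₂)) :
            ((yhat.obj g.left, a) : D × A) ⟶ (d₂, a₂)) := by
        rw [prod_comp]
        simp [psi_comp]
      dsimp only [Prod.mkHom]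
      erw [← split₂, G.map_comp, ← Category.assoc, ← fac, Category.assoc]
      rfl
    · ext ⟨c, a⟩
      dsimp
      have fac := (hM a (yhat.obj c)).fac (extCoconeFst i yhat hy M G γ a (yhat.obj c))
        (CostructuredArrow.mk ((e i yhat hy).inv.app c))
      dsimp at fac
      simp only [Functor.comp_map, densityCocone_ι_app, extCoconeFst_ι_app, sectL_map_aux, CostructuredArrow.mk_left, CostructuredArrow.mk_hom_eq_self] at fac
      rw [psi_eInv] at fac
      erw [Functor.comp_map, sectL_map_aux, psi_eInv, show ((𝟙 (yhat.obj c), 𝟙 a) : ((yhat.obj c, a) : D × A) ⟶ (yhat.obj c, a)) = 𝟙 (((yhat.obj c, a)) : D × A) from rfl, M.map_id, G.map_id, Category.id_comp, Category.comp_id] at fac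
      exact fac

end FstVar

end DayKanAux

open DayKanAux

/-- Let `C` be a small category, `Ĉ = Set^{Cᵒᵖ}`, and let `𝒞` (here `D`) be a reflective
full subcategory of `Ĉ` with inclusion `i` through which the Yoneda embedding factors as
`y = ŷ ⋙ i`.  If `⊗` is the tensor product of a closed symmetric monoidal structure on
`𝒞`, then `⊗ : 𝒞 × 𝒞 ⥤ 𝒞` is (naturally isomorphic to) the left Kan extension of
`⊗ ∘ (ŷ × ŷ)` along `ŷ × ŷ`, i.e. `⊗` together with the identity natural transformation
on `(ŷ × ŷ) ⋙ ⊗` is a left Kan extension of `(ŷ × ŷ) ⋙ ⊗` along `ŷ × ŷ`. -/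
theorem tensor_is_leftKanExtension {C : Type u} [SmallCategory C]
    {D : Type (u + 1)} [Category.{u} D]
    [MonoidalCategory D] [SymmetricCategory D] [MonoidalClosed D]
    (i : D ⥤ (Cᵒᵖ ⥤ Type u)) [Reflective i]
    (yhat : C ⥤ D) (hy : yhat ⋙ i = yoneda) :
    (MonoidalCategory.tensor D).IsLeftKanExtension
      (𝟙 (yhat.prod yhat ⋙ MonoidalCategory.tensor D)) := by
  apply isLKE_of_bijective
  intro G
  -- preservation of the density colimits in each variable
  have hM₂ : ∀ (a : D) (d : D),
      IsColimit ((Prod.sectL D a ⋙ MonoidalCategory.tensor D).mapCocone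
        (densityCocone i yhat hy d)) := by
    intro a d
    letI : PreservesColimitsOfSize.{u, u} (Prod.sectL D a ⋙ MonoidalCategory.tensor D) :=
      preservesColimits_of_natIso
        (NatIso.ofComponents (F := tensorLeft a)
          (G := Prod.sectL D a ⋙ MonoidalCategory.tensor D)
          (fun x => β_ a x) (fun f => by simp))
    exact isColimitOfPreserves _ (densityIsColimit i yhat hy d)
  have hM₃ : ∀ (a : C) (d : D),
      IsColimit ((Prod.sectR a D ⋙ (yhat.prod (𝟭 D) ⋙ MonoidalCategory.tensor D)).mapCocone
        (densityCocone i yhat hy d)) := by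
    intro a d
    letI : PreservesColimitsOfSize.{u, u}
        (Prod.sectR a D ⋙ (yhat.prod (𝟭 D) ⋙ MonoidalCategory.tensor D)) :=
      preservesColimits_of_natIso
        (NatIso.ofComponents (F := tensorLeft (yhat.obj a)) (fun x => Iso.refl _)
          (fun f => by simp))
    exact isColimitOfPreserves _ (densityIsColimit i yhat hy d)
  have b1 := restriction_bijective_fst i yhat hy (MonoidalCategory.tensor D) G hM₂
  have b2 := restriction_bijective_snd i yhat hy
    (yhat.prod (𝟭 D) ⋙ MonoidalCategory.tensor D) (yhat.prod (𝟭 D) ⋙ G) hM₃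
  have key : (fun (β : MonoidalCategory.tensor D ⟶ G) =>
      Functor.whiskerLeft (yhat.prod yhat) β) =
      (fun γ => Functor.whiskerLeft ((𝟭 C).prod yhat) γ) ∘
      (fun β => Functor.whiskerLeft (yhat.prod (𝟭 D)) β) := by
    funext β
    rfl
  rw [key]
  exact b2.comp b1
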